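/- If p is a prime of m+1 decimal digits (m ≥ 4) whose leftmost digit is 4 and rightmost digit is 9, with p - 2 prime, and r(p) = 2(p-2), then all decimal digits of p other than the leading one are 9; that is, p = 5·10^m - 1. -/
import Mathlib


def L (n : ℕ) : ℕ := (Nat.digits 10 n).length

def r (n : ℕ) : ℕ := Nat.ofDigits 10 ((Nat.digits 10 n).reverse)

lemma key_rev : ∀ n (d : List ℕ), d.length = n → (∀ x ∈ d, x < 10) →
    Nat.ofDigits 10 d.reverse + 10 ^ n = 2 * Nat.ofDigits 10 d + 1 →
    Nat.ofDigits 10 d + 1 = 10 ^ n := by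
  intro n
  induction n using Nat.strong_induction_on with
  | _ n ih =>
    match n with
    | 0 =>
      intro d hlen _ heq
      rw [List.length_eq_zero_iff] at hlen
      subst hlen
      simpa using heq
    | 1 =>
      intro d hlen _ heq
      obtain ⟨a, rfl⟩ : ∃ a, d = [a] := by
        cases d with
        | nil => simp at hlen
        | cons a t =>
          simp at hlen
          exact ⟨a, by rw [hlen]⟩
      simp [Nat.ofDigits_cons] at heq ⊢
      omega
    | (k+2) =>
      intro d hlen hdig heq
      obtain ⟨a, t, rfl⟩ : ∃ a t, d = a :: t := by
        cases d with
        | nil => simp at hlen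
        | cons a t => exact ⟨a, t, rfl⟩
      obtain ⟨t', b, rfl⟩ : ∃ t' b, t = t' ++ [b] := by
        rcases List.eq_nil_or_concat t with h | ⟨t', b, h⟩
        · rw [h] at hlen; simp at hlen
        · exact ⟨t', b, by simpa using h⟩
      have hk : t'.length = k := by simpa using hlen
      have ha : a < 10 := hdig a (by simp)
      have hb : b < 10 := hdig b (by simp)
      have hdig' : ∀ x ∈ t', x < 10 := fun x hx => hdig x (by simp [hx])
      have hX : Nat.ofDigits 10 t' < 10 ^ k := by
        rw [← hk]; exact Nat.ofDigits_lt_base_pow_length (by norm_num) hdig'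
      have hY : Nat.ofDigits 10 t'.reverse < 10 ^ k := by
        have := Nat.ofDigits_lt_base_pow_length (b := 10) (l := t'.reverse) (by norm_num)
          (fun x hx => hdig' x (List.mem_reverse.mp hx))
        simpa [hk] using this
      have hrev : (a :: (t' ++ [b])).reverse = b :: (t'.reverse ++ [a]) := by simp
      rw [hrev] at heq
      simp only [Nat.ofDigits_cons, Nat.ofDigits_append, Nat.ofDigits_nil,
        List.length_reverse, hk] at heq ⊢
      have hpow : 10 ^ (k + 2) = 100 * 10 ^ k := by ring
      rw [hpow] at heq ⊢
      have hP : 1 ≤ 10 ^ k := Nat.one_le_pow _ _ (by norm_num)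
      have hab : a = 9 ∧ b = 9 := by
        interval_cases a <;> interval_cases b <;> omega
      obtain ⟨rfl, rfl⟩ := hab
      have hIH : Nat.ofDigits 10 t' + 1 = 10 ^ k := by
        apply ih k (by omega) t' hk hdig'
        omega
      omega

theorem stmt_17 (p m : ℕ) (hm : 4 ≤ m) (hp : p.Prime) (hL : L p = m + 1)
    (hlead : p / 10 ^ m = 4) (hlast : p % 10 = 9)
    (hp2 : (p - 2).Prime) (hrp : r p = 2 * (p - 2)) :
    p = 5 * 10 ^ m - 1 := by
  have hp2le : 2 ≤ p := hp.two_le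
  have hp0 : 0 < p := by omega
  have hhead : Nat.digits 10 p = p % 10 :: Nat.digits 10 (p / 10) :=
    Nat.digits_def' (by norm_num) hp0
  rw [hlast] at hhead
  have hlen : (Nat.digits 10 (p / 10)).length = m := by
    have : (Nat.digits 10 p).length = m + 1 := hL
    rw [hhead] at this
    simpa using this
  obtain ⟨t', c, hts⟩ : ∃ t' c, Nat.digits 10 (p / 10) = t' ++ [c] := by
    rcases List.eq_nil_or_concat (Nat.digits 10 (p / 10)) with h | ⟨t', c, h⟩
    · rw [h] at hlen; simp at hlen; omega
    · exact ⟨t', c, by simpa using h⟩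
  have hD : Nat.digits 10 p = 9 :: (t' ++ [c]) := by rw [hhead, hts]
  have hk : t'.length = m - 1 := by
    rw [hts] at hlen; simp at hlen; omega
  have hdig' : ∀ x ∈ t', x < 10 := by
    intro x hx
    exact Nat.digits_lt_base (by norm_num) (by rw [hD]; simp [hx])
  have hc : c < 10 := Nat.digits_lt_base (by norm_num) (by rw [hD]; simp)
  set X := Nat.ofDigits 10 t' with hXdef
  set Y := Nat.ofDigits 10 t'.reverse with hYdef
  have hX : X < 10 ^ (m - 1) := by
    rw [hXdef, ← hk]; exact Nat.ofDigits_lt_base_pow_length (by norm_num) hdig'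
  have hY : Y < 10 ^ (m - 1) := by
    have := Nat.ofDigits_lt_base_pow_length (b := 10) (l := t'.reverse) (by norm_num)
      (fun x hx => hdig' x (List.mem_reverse.mp hx))
    simpa [hYdef, hk] using this
  have hpeq : p = 9 + 10 * (X + 10 ^ (m - 1) * c) := by
    conv_lhs => rw [← Nat.ofDigits_digits 10 p, hD]
    simp [Nat.ofDigits_cons, Nat.ofDigits_append, hk, hXdef]
  have hpowm : 10 ^ m = 10 * 10 ^ (m - 1) := by
    rw [← pow_succ']
    congr 1
    omega
  have hc4 : c = 4 := by
    have h1 : p = (9 + 10 * X) + 10 ^ m * c := by rw [hpeq, hpowm]; ring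
    have h2 : 9 + 10 * X < 10 ^ m := by rw [hpowm]; omega
    rw [h1, Nat.add_mul_div_left _ _ (by positivity : 0 < 10 ^ m),
      Nat.div_eq_of_lt h2] at hlead
    omega
  subst hc4
  have hrpval : r p = 4 + 10 * (Y + 10 ^ (m - 1) * 9) := by
    rw [r, hD]
    have hrev : (9 :: (t' ++ [4])).reverse = 4 :: (t'.reverse ++ [9]) := by simp
    rw [hrev]
    simp [Nat.ofDigits_cons, Nat.ofDigits_append, hk, hYdef]
  have heq2 : Y + 10 ^ (m - 1) = 2 * X + 1 := by
    rw [hrpval] at hrp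
    omega
  have hfin : X + 1 = 10 ^ (m - 1) := key_rev (m - 1) t' hk hdig' (by omega)
  omega
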